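/- Let V = U ⊕ W be a Lagrangian decomposition with respect to a non-degenerate symmetric bilinear form F, and t ∈ U ⊗ U with associated subspace W_t = { w + f_t(w) | w ∈ W }. Then W_t is Lagrangian (W_t = W_t^⊥) if and only if t is skew-symmetric, i.e., t ∈ Λ²U (equivalently t + t^{21} = 0). -/

import Mathlib

open TensorProduct

/-- The linear map `j : U ⊗ U → Hom(W, U)` sending `t = Σ aᵢ ⊗ bᵢ` to `w ↦ Σ F(w, aᵢ) bᵢ`. -/
noncomputable def tensorToHom
    {k V : Type*} [Field k] [AddCommGroup V] [Module k V]
    (F : LinearMap.BilinForm k V) (U W : Submodule k V) :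
    (U ⊗[k] U) →ₗ[k] (W →ₗ[k] U) :=
  (dualTensorHom k W U).comp
    (TensorProduct.map
      ((LinearMap.lcomp k k W.subtype).comp ((LinearMap.flip F).comp U.subtype)) LinearMap.id)

/-- The graph subspace `W_t = { w + f_t(w) | w ∈ W }`. -/
noncomputable def graphSubspace
    {k V : Type*} [Field k] [AddCommGroup V] [Module k V]
    (F : LinearMap.BilinForm k V) (U W : Submodule k V) (t : U ⊗[k] U) :
    Submodule k V :=
  LinearMap.range (W.subtype + U.subtype.comp (tensorToHom F U W t))

section aux
variable {k V : Type*} [Field k] [AddCommGroup V] [Module k V]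
  (F : LinearMap.BilinForm k V) (U W : Submodule k V)

lemma tensorToHom_tmul (a b : U) (w : W) :
    tensorToHom F U W (a ⊗ₜ b) w = F w a • b := by
  simp [tensorToHom]

lemma pairing_lemma (t : U ⊗[k] U) (w w' : W) :
    F w' (tensorToHom F U W t w) = F w (tensorToHom F U W ((TensorProduct.comm k U U) t) w') := by
  induction t using TensorProduct.induction_on with
  | zero => simp
  | tmul a b => simp [tensorToHom_tmul]; ring
  | add x y hx hy => simp only [map_add, LinearMap.add_apply, Submodule.coe_add, map_add, hx, hy]

lemma dualTensorHom_injective' (k W U : Type*) [Field k] [AddCommGroup W] [Module k W]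
    [AddCommGroup U] [Module k U] :
    Function.Injective (dualTensorHom k W U) := by
  classical
  let b := Module.Basis.ofVectorSpace k U
  let E := (TensorProduct.congr (LinearEquiv.refl k (Module.Dual k W)) b.repr).trans
    (TensorProduct.finsuppScalarRight k k (Module.Dual k W) _)
  have key : ∀ (x : Module.Dual k W ⊗[k] U) j (w : W),
      (E x j) w = b.repr (dualTensorHom k W U x w) j := by
    intro x
    induction x using TensorProduct.induction_on with
    | zero => simp [E]
    | tmul f u =>
        intro j w
        simp [E, TensorProduct.finsuppScalarRight_apply_tmul_apply, mul_comm]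
    | add x y hx hy =>
        intro j w
        simp only [map_add, Finsupp.add_apply, LinearMap.add_apply, map_add, hx, hy]
  intro x y h
  apply E.injective
  ext j w
  rw [key, key, h]

end aux

section aux2
variable {k V : Type*} [Field k] [AddCommGroup V] [Module k V]
  {F : LinearMap.BilinForm k V} {U W : Submodule k V}

lemma eq_zero_of_perp (hsymm : F.IsSymm) (hnd : F.Nondegenerate)
    (hUW : IsCompl U W) (hU : ∀ u ∈ U, ∀ u' ∈ U, F u u' = 0)
    (u : V) (huU : u ∈ U) (h : ∀ w ∈ W, F w u = 0) : u = 0 := by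
  apply hnd.1
  intro n
  have hn : n ∈ U ⊔ W := by rw [hUW.sup_eq_top]; trivial
  obtain ⟨x, hx, y, hy, rfl⟩ := Submodule.mem_sup.mp hn
  have h1 : F (x + y) u = 0 := by
    rw [map_add, LinearMap.add_apply, hU x hx u huU, h y hy, add_zero]
  calc F u (x + y) = F (x + y) u := by exact hsymm.eq u (x+y)
  _ = 0 := h1

lemma tensorToHom_injective (hsymm : F.IsSymm) (hnd : F.Nondegenerate)
    (hUW : IsCompl U W) (hU : ∀ u ∈ U, ∀ u' ∈ U, F u u' = 0) :
    Function.Injective (tensorToHom F U W) := by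
  have hφ : Function.Injective
      ((LinearMap.lcomp k k W.subtype).comp ((LinearMap.flip F).comp U.subtype) :
        U →ₗ[k] Module.Dual k W) := by
    rw [injective_iff_map_eq_zero]
    intro u hu
    have h : ∀ w ∈ W, F w (u : V) = 0 := by
      intro w hw
      have := congrFun (congrArg DFunLike.coe hu) ⟨w, hw⟩
      simpa using this
    ext
    exact eq_zero_of_perp hsymm hnd hUW hU u u.2 h
  have : tensorToHom F U W = (dualTensorHom k W U).comp
      (LinearMap.rTensor U ((LinearMap.lcomp k k W.subtype).comp
        ((LinearMap.flip F).comp U.subtype))) := rfl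
  rw [this]
  exact (dualTensorHom_injective' k W U).comp
    (Module.Flat.rTensor_preserves_injective_linearMap _ hφ)

end aux2

section aux3
variable {k V : Type*} [Field k] [AddCommGroup V] [Module k V]
  {F : LinearMap.BilinForm k V} {U W : Submodule k V}

lemma gram_lemma (hsymm : F.IsSymm)
    (hU : ∀ u ∈ U, ∀ u' ∈ U, F u u' = 0)
    (hW : ∀ w ∈ W, ∀ w' ∈ W, F w w' = 0)
    (t : U ⊗[k] U) (w w' : W) :
    F ((w : V) + tensorToHom F U W t w) ((w' : V) + tensorToHom F U W t w') =
      F w (tensorToHom F U W (t + (TensorProduct.comm k U U) t) w') := by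
  have e1 : F (w : V) (w' : V) = 0 := hW w w.2 w' w'.2
  have e2 : F (tensorToHom F U W t w : V) (tensorToHom F U W t w' : V) = 0 :=
    hU _ (tensorToHom F U W t w).2 _ (tensorToHom F U W t w').2
  have e3 : F (tensorToHom F U W t w : V) (w' : V) = F (w' : V) (tensorToHom F U W t w : V) := by
    exact hsymm.eq _ _
  simp only [map_add, LinearMap.add_apply]
  rw [e1, e2, e3, pairing_lemma F U W t w w']
  simp only [Submodule.coe_add, map_add]
  ring
end aux3

/-- For a Lagrangian decomposition `V = U ⊕ W` and `t ∈ U ⊗ U`, the subspace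
`W_t` is Lagrangian (`W_t = W_t^⊥`) if and only if `t` is skew-symmetric
(`t + t²¹ = 0`, i.e. `t ∈ Λ²U`). -/
theorem graphSubspace_lagrangian_iff_skew
    {k V : Type*} [Field k] [AddCommGroup V] [Module k V]
    (hchar : (2 : k) ≠ 0)
    (F : LinearMap.BilinForm k V) (hsymm : F.IsSymm) (hnd : F.Nondegenerate)
    (U W : Submodule k V) (hUW : IsCompl U W)
    (hU : ∀ u ∈ U, ∀ u' ∈ U, F u u' = 0)
    (hW : ∀ w ∈ W, ∀ w' ∈ W, F w w' = 0)
    (t : U ⊗[k] U) :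
    graphSubspace F U W t = F.orthogonal (graphSubspace F U W t) ↔
      t + (TensorProduct.comm k U U) t = 0 := by
  classical
  set f := tensorToHom F U W with hf
  set g : W →ₗ[k] V := W.subtype + U.subtype.comp (f t) with hg
  have hgw : ∀ w : W, g w = (w : V) + (f t w : V) := fun w => rfl
  have hgr : graphSubspace F U W t = LinearMap.range g := rfl
  constructor
  · intro h
    have iso : ∀ w w' : W, F (g w) (g w') = 0 := by
      intro w w'
      have hmem : g w' ∈ F.orthogonal (graphSubspace F U W t) := by
        rw [← h, hgr]; exact ⟨w', rfl⟩
      rw [LinearMap.BilinForm.mem_orthogonal_iff] at hmem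
      exact hmem (g w) (hgr ▸ ⟨w, rfl⟩)
    have hzero : f (t + (TensorProduct.comm k U U) t) = 0 := by
      ext w'
      show ((f (t + (TensorProduct.comm k U U) t)) w' : V) = ((0 : W →ₗ[k] U) w' : V)
      simp only [LinearMap.zero_apply, ZeroMemClass.coe_zero]
      apply eq_zero_of_perp hsymm hnd hUW hU _ (f (t + (TensorProduct.comm k U U) t) w').2
      intro w hw
      have h1 := iso ⟨w, hw⟩ w'
      rw [hgw, hgw, gram_lemma hsymm hU hW] at h1
      exact h1
    exact tensorToHom_injective hsymm hnd hUW hU (hzero.trans (map_zero _).symm)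
  · intro hs
    have iso : ∀ w w' : W, F (g w) (g w') = 0 := by
      intro w w'
      rw [hgw, hgw, gram_lemma hsymm hU hW, hs]
      simp
    have hsub : graphSubspace F U W t ≤ F.orthogonal (graphSubspace F U W t) := by
      rw [hgr]
      rintro x ⟨w', rfl⟩
      rw [LinearMap.BilinForm.mem_orthogonal_iff]
      rintro n hn
      obtain ⟨w, rfl⟩ := hn
      exact iso w w'
    refine le_antisymm hsub ?_
    intro v hv
    have hv' : v ∈ U ⊔ W := by rw [hUW.sup_eq_top]; trivial
    obtain ⟨u, hu, wv, hwv, rfl⟩ := Submodule.mem_sup.mp hv'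
    set w : W := ⟨wv, hwv⟩ with hwdef
    have hgmem : g w ∈ F.orthogonal (graphSubspace F U W t) := hsub (hgr ▸ ⟨w, rfl⟩)
    have hdiff : (u + wv) - g w ∈ F.orthogonal (graphSubspace F U W t) := sub_mem hv hgmem
    have hdeq : (u + wv) - g w = u - (f t w : V) := by rw [hgw]; show u + wv - (wv + _) = _; abel
    have huU : u - (f t w : V) ∈ U := sub_mem hu (f t w).2
    have hz : u - (f t w : V) = 0 := by
      apply eq_zero_of_perp hsymm hnd hUW hU _ huU
      intro w0 hw0
      rw [hdeq, LinearMap.BilinForm.mem_orthogonal_iff] at hdiff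
      have h1 : F (g ⟨w0, hw0⟩) (u - (f t w : V)) = 0 :=
        hdiff _ (hgr ▸ ⟨⟨w0, hw0⟩, rfl⟩)
      rw [hgw] at h1
      have h2 : F ((f t ⟨w0, hw0⟩ : U) : V) (u - (f t w : V)) = 0 :=
        hU _ (f t ⟨w0, hw0⟩).2 _ huU
      simp only [map_add, LinearMap.add_apply] at h1
      rw [h2, add_zero] at h1
      exact h1
    have heq : u + wv = g w := by rw [hgw]; rw [sub_eq_zero] at hz; rw [hz]; abel
    rw [hgr]
    exact ⟨w, heq.symm⟩
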